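/- Let S be a closed connected subset of the unit sphere S^{n-1} in R^n that is Lipschitz normally embedded with LNE constant L (i.e., the inner distance in S is at most L times the Euclidean distance, for all pairs of points of S). Then the non-negative cone over S with vertex the origin, defined as the union of all rays from the origin through points of S, is Lipschitz normally embedded with LNE constant at most 2L+1. -/

import Mathlib

open scoped ENNReal

/-- Length of a path `γ : ℝ → E` over `[0,1]`, as total variation. -/
noncomputable def pathLength {E : Type*} [PseudoEMetricSpace E] (γ : ℝ → E) : ℝ≥0∞ :=
  eVariationOn γ (Set.Icc 0 1)

/-- Inner distance in `S`: infimum of lengths of paths in `S` joining `x` and `y`. -/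
noncomputable def innerDist {E : Type*} [PseudoEMetricSpace E] (S : Set E) (x y : E) : ℝ≥0∞ :=
  ⨅ (γ : ℝ → E) (_ : ContinuousOn γ (Set.Icc 0 1)) (_ : γ 0 = x) (_ : γ 1 = y)
    (_ : γ '' Set.Icc 0 1 ⊆ S), pathLength γ

/-- `S` is LNE with constant `L`. -/
def IsLNEWith {E : Type*} [NormedAddCommGroup E] (L : ℝ) (S : Set E) : Prop :=
  ∀ x ∈ S, ∀ y ∈ S, innerDist S x y ≤ ENNReal.ofReal (L * dist x y)

/-- `S` is Lipschitz normally embedded. -/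
def IsLNE {E : Type*} [NormedAddCommGroup E] (S : Set E) : Prop :=
  ∃ L > 0, IsLNEWith L S

/-- The non-negative cone over `S` with vertex the origin. -/
def nonnegCone {n : ℕ} (S : Set (EuclideanSpace ℝ (Fin n))) : Set (EuclideanSpace ℝ (Fin n)) :=
  {x | ∃ t : ℝ, 0 ≤ t ∧ ∃ u ∈ S, x = t • u}

lemma innerDist_le' {E : Type*} [PseudoEMetricSpace E] {S : Set E} {x y : E} (γ : ℝ → E)
    (hγ : ContinuousOn γ (Set.Icc 0 1)) (h0 : γ 0 = x) (h1 : γ 1 = y)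
    (him : γ '' Set.Icc 0 1 ⊆ S) : innerDist S x y ≤ pathLength γ :=
  iInf_le_of_le γ <| iInf_le_of_le hγ <| iInf_le_of_le h0 <| iInf_le_of_le h1 <| iInf_le _ him

lemma innerDist_symm_le {E : Type*} [PseudoEMetricSpace E] (S : Set E) (x y : E) :
    innerDist S x y ≤ innerDist S y x := by
  refine le_iInf fun γ => le_iInf fun hγ => le_iInf fun h0 => le_iInf fun h1 =>
    le_iInf fun him => ?_
  have himg : (fun r : ℝ => 1 - r) '' Set.Icc 0 1 = Set.Icc 0 1 := by
    rw [Set.image_const_sub_Icc]; norm_num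
  have hcont : ContinuousOn (fun r : ℝ => γ (1 - r)) (Set.Icc 0 1) := by
    apply hγ.comp (by fun_prop)
    intro r hr; rw [← himg]; exact Set.mem_image_of_mem _ hr
  have hanti : AntitoneOn (fun r : ℝ => 1 - r) (Set.Icc (0:ℝ) 1) :=
    fun a _ b _ hab => by simp only []; linarith
  have hlen : pathLength (fun r : ℝ => γ (1 - r)) = pathLength γ := by
    show eVariationOn (γ ∘ fun r : ℝ => 1 - r) _ = _
    rw [eVariationOn.comp_eq_of_antitoneOn γ _ hanti, himg]
    rfl
  refine le_trans (innerDist_le' _ hcont (by simp [h1]) (by simp [h0]) ?_) hlen.le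
  rw [show (fun r : ℝ => γ (1 - r)) '' Set.Icc 0 1
      = γ '' ((fun r : ℝ => 1 - r) '' Set.Icc 0 1) from (Set.image_image _ _ _).symm, himg]
  exact him

lemma cone_key {n : ℕ} (S : Set (EuclideanSpace ℝ (Fin n)))
    (hS : S ⊆ Metric.sphere (0 : EuclideanSpace ℝ (Fin n)) 1)
    (L : ℝ) (hL : 0 < L) (hLNE : IsLNEWith L S)
    {t s : ℝ} {u v : EuclideanSpace ℝ (Fin n)}
    (ht : 0 ≤ t) (hs : 0 ≤ s) (hu : u ∈ S) (hv : v ∈ S) (hts : t ≤ s) :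
    innerDist (nonnegCone S) (t • u) (s • v) ≤
      ENNReal.ofReal ((2 * L + 1) * dist (t • u) (s • v)) := by
  have hnu : ‖u‖ = 1 := by simpa using hS hu
  have hnv : ‖v‖ = 1 := by simpa using hS hv
  set D := dist (t • u) (s • v) with hD
  have hD0 : 0 ≤ D := dist_nonneg
  have hduv : 0 ≤ dist u v := dist_nonneg
  have hst_le : s - t ≤ D := by
    have h1 := norm_sub_norm_le (s • v) (t • u)
    rw [norm_smul, norm_smul, hnu, hnv, Real.norm_eq_abs, Real.norm_eq_abs,
      abs_of_nonneg hs, abs_of_nonneg ht, mul_one, mul_one] at h1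
    calc s - t ≤ ‖s • v - t • u‖ := h1
      _ = D := by rw [hD, dist_eq_norm, norm_sub_rev]
  have htd : t * dist u v ≤ 2 * D := by
    have h1 : dist (t • u) (t • v) ≤ dist (t • u) (s • v) + dist (s • v) (t • v) :=
      dist_triangle _ _ _
    have h2 : dist (t • u) (t • v) = t * dist u v := by
      rw [dist_smul₀, Real.norm_eq_abs, abs_of_nonneg ht]
    have h3 : dist (s • v) (t • v) = s - t := by
      rw [dist_eq_norm, ← sub_smul, norm_smul, hnv, mul_one, Real.norm_eq_abs,
        abs_of_nonneg (by linarith)]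
    linarith
  refine ENNReal.le_of_forall_pos_le_add fun ε hε _ => ?_
  have hεR : (0:ℝ) < ε := hε
  have ht1 : (0:ℝ) < t + 1 := by linarith
  set ε' : ℝ := (ε : ℝ) / (t + 1) with hε'
  have hε'0 : 0 < ε' := div_pos hεR ht1
  have hεt : t * ε' ≤ (ε : ℝ) := by
    rw [hε', mul_comm, div_mul_eq_mul_div, div_le_iff₀ ht1]
    nlinarith [hεR.le]
  have hlt : innerDist S u v < ENNReal.ofReal (L * dist u v + ε') := by
    refine lt_of_le_of_lt (hLNE u hu v hv) ?_
    rw [ENNReal.ofReal_lt_ofReal_iff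
      (by nlinarith [mul_nonneg hL.le hduv])]
    nlinarith [mul_nonneg hL.le hduv]
  simp only [innerDist, iInf_lt_iff] at hlt
  obtain ⟨γ, hγ, h0, h1, him, hlen⟩ := hlt
  set c : ℝ → ℝ := fun r => t + (s - t) * max (2 * r - 1) 0 with hc
  set σ : ℝ → ℝ := fun r => min (2 * r) 1 with hσ
  set γ' : ℝ → EuclideanSpace ℝ (Fin n) := fun r => c r • γ (σ r) with hγ'
  have hcmono : Monotone c := fun a b hab => by
    have h1 : max (2 * a - 1) 0 ≤ max (2 * b - 1) 0 := max_le_max (by linarith) le_rfl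
    have := mul_le_mul_of_nonneg_left h1 (sub_nonneg.2 hts)
    simp only [hc]; linarith
  have hσmaps : Set.MapsTo σ (Set.Icc 0 1) (Set.Icc 0 1) := fun r hr =>
    ⟨le_min (by linarith [hr.1]) zero_le_one, min_le_right _ _⟩
  have hccont : Continuous c := by fun_prop
  have hγ'cont : ContinuousOn γ' (Set.Icc 0 1) := by
    apply hccont.continuousOn.smul
    exact hγ.comp (by fun_prop) hσmaps
  have h'0 : γ' 0 = t • u := by
    show (t + (s - t) * max (2 * 0 - 1) 0) • γ (min (2 * 0) 1) = t • u
    norm_num [h0]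
  have h'1 : γ' 1 = s • v := by
    show (t + (s - t) * max (2 * 1 - 1) 0) • γ (min (2 * 1) 1) = s • v
    norm_num [h1]
  have h'sub : γ' '' Set.Icc 0 1 ⊆ nonnegCone S := by
    rintro _ ⟨r, hr, rfl⟩
    exact ⟨c r, add_nonneg ht (mul_nonneg (sub_nonneg.2 hts) (le_max_right _ _)),
      γ (σ r), him (Set.mem_image_of_mem γ (hσmaps hr)), rfl⟩
  have split : eVariationOn γ' (Set.Icc 0 (1/2 : ℝ)) + eVariationOn γ' (Set.Icc (1/2 : ℝ) 1)
      = eVariationOn γ' (Set.Icc (0:ℝ) 1) := by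
    have := eVariationOn.Icc_add_Icc γ' (s := Set.univ) (a := (0:ℝ)) (b := 1/2) (c := 1)
      (by norm_num) (by norm_num) (Set.mem_univ _)
    simpa using this
  have p1 : eVariationOn γ' (Set.Icc 0 (1/2 : ℝ)) ≤ ENNReal.ofReal t * pathLength γ := by
    have e1 : Set.EqOn γ' ((fun w => t • γ w) ∘ fun r : ℝ => 2 * r) (Set.Icc 0 (1/2 : ℝ)) := by
      intro r hr
      have hm1 : min (2 * r) 1 = 2 * r := min_eq_left (by linarith [hr.2])
      have hm2 : max (2 * r - 1) 0 = 0 := max_eq_right (by linarith [hr.2])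
      show (t + (s - t) * max (2 * r - 1) 0) • γ (min (2 * r) 1) = t • γ (2 * r)
      rw [hm1, hm2]; ring_nf
    have hmono2 : MonotoneOn (fun r : ℝ => 2 * r) (Set.Icc 0 (1/2 : ℝ)) :=
      fun a _ b _ hab => by simp only []; linarith
    rw [eVariationOn.eq_of_eqOn e1, eVariationOn.comp_eq_of_monotoneOn _ _ hmono2]
    have himg : (fun r : ℝ => 2 * r) '' Set.Icc 0 (1/2 : ℝ) = Set.Icc (0:ℝ) 1 := by
      rw [Set.image_mul_left_Icc (by norm_num) (by norm_num)]; norm_num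
    rw [himg]
    have lip : LipschitzWith t.toNNReal (fun w : EuclideanSpace ℝ (Fin n) => t • w) :=
      LipschitzWith.of_dist_le_mul fun a b => by
        rw [dist_smul₀, Real.norm_eq_abs, abs_of_nonneg ht, Real.coe_toNNReal _ ht]
    exact lip.lipschitzOnWith.comp_eVariationOn_le (Set.mapsTo_univ γ (Set.Icc 0 1))
  have p2 : eVariationOn γ' (Set.Icc (1/2 : ℝ) 1) ≤ ENNReal.ofReal (s - t) := by
    have e2 : Set.EqOn γ' ((fun w : ℝ => w • γ 1) ∘ c) (Set.Icc (1/2 : ℝ) 1) := by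
      intro r hr
      have hm1 : min (2 * r) 1 = 1 := min_eq_right (by linarith [hr.1])
      show (t + (s - t) * max (2 * r - 1) 0) • γ (min (2 * r) 1)
        = (t + (s - t) * max (2 * r - 1) 0) • γ 1
      rw [hm1]
    rw [eVariationOn.eq_of_eqOn e2]
    have lip : LipschitzWith 1 (fun w : ℝ => w • γ 1) :=
      LipschitzWith.of_dist_le_mul fun a b => by
        rw [dist_eq_norm, ← sub_smul, norm_smul, h1, hnv, mul_one, Real.norm_eq_abs,
          NNReal.coe_one, one_mul, Real.dist_eq]
    have hb1 := lip.lipschitzOnWith.comp_eVariationOn_le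
      (Set.mapsTo_univ c (Set.Icc (1/2 : ℝ) 1))
    have hb2 : eVariationOn c (Set.Icc (1/2 : ℝ) 1) ≤ ENNReal.ofReal (s - t) := by
      have hm := (hcmono.monotoneOn Set.univ).eVariationOn_le (a := (1/2 : ℝ)) (b := 1)
        (Set.mem_univ _) (Set.mem_univ _)
      simp only [Set.univ_inter] at hm
      have hval : c 1 - c (1/2 : ℝ) = s - t := by
        show (t + (s - t) * max (2 * 1 - 1) 0) - (t + (s - t) * max (2 * (1/2 : ℝ) - 1) 0)
          = s - t
        norm_num
      rwa [hval] at hm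
    calc eVariationOn ((fun w : ℝ => w • γ 1) ∘ c) (Set.Icc (1/2 : ℝ) 1)
        ≤ 1 * eVariationOn c (Set.Icc (1/2 : ℝ) 1) := hb1
      _ = eVariationOn c (Set.Icc (1/2 : ℝ) 1) := one_mul _
      _ ≤ ENNReal.ofReal (s - t) := hb2
  refine (innerDist_le' γ' hγ'cont h'0 h'1 h'sub).trans ?_
  calc pathLength γ'
      ≤ ENNReal.ofReal t * pathLength γ + ENNReal.ofReal (s - t) := by
        rw [pathLength, ← split]; exact add_le_add p1 p2
    _ ≤ ENNReal.ofReal t * ENNReal.ofReal (L * dist u v + ε') + ENNReal.ofReal (s - t) :=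
        add_le_add_left (mul_le_mul_right hlen.le _) _
    _ = ENNReal.ofReal (t * (L * dist u v + ε') + (s - t)) := by
        rw [← ENNReal.ofReal_mul ht, ← ENNReal.ofReal_add
          (mul_nonneg ht (by nlinarith [mul_nonneg hL.le hduv])) (by linarith)]
    _ ≤ ENNReal.ofReal ((2 * L + 1) * D + ε) := ENNReal.ofReal_le_ofReal (by
        nlinarith [mul_le_mul_of_nonneg_left htd hL.le])
    _ ≤ ENNReal.ofReal ((2 * L + 1) * D) + ENNReal.ofReal ε := ENNReal.ofReal_add_le
    _ = ENNReal.ofReal ((2 * L + 1) * D) + ε := by rw [ENNReal.ofReal_coe_nnreal]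

theorem cone_LNE_of_LNE {n : ℕ} (S : Set (EuclideanSpace ℝ (Fin n)))
    (hS : S ⊆ Metric.sphere (0 : EuclideanSpace ℝ (Fin n)) 1)
    (hclosed : IsClosed S) (hconn : IsConnected S)
    (L : ℝ) (hL : 0 < L) (hLNE : IsLNEWith L S) :
    IsLNEWith (2 * L + 1) (nonnegCone S) := by
  rintro x ⟨t, ht, u, hu, rfl⟩ y ⟨s, hs, v, hv, rfl⟩
  rcases le_total t s with hts | hts
  · exact cone_key S hS L hL hLNE ht hs hu hv hts
  · rw [le_antisymm (innerDist_symm_le _ _ _) (innerDist_symm_le _ _ _), dist_comm]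
    exact cone_key S hS L hL hLNE hs ht hv hu hts
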